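/- Let (M,d) be a metric space, X a Banach space and α ≥ 0. Let φ : M ⇉ X be a closed-valued and convex-valued lower hemicontinuous correspondence that is lower pointwise (α+ε)-Lipschitz for every ε > 0. Then for every ε > 0, every b ∈ M and every y ∈ φ(b), there exists a continuous selection f : M → X of φ with f(b) = y such that ‖f(b) − f(a)‖ ≤ (α+ε)·d(b,a) for all a ∈ M. -/

import Mathlib

open Filter Metric Set

/-- `f` is pointwise `α`-Lipschitz at `b`:
`limsup_{r→0⁺} ( r⁻¹ · sup { d(f b, f a) : a ∈ closedBall b r } ) ≤ α`. -/
noncomputable def PtwiseLipschitzAt {M X : Type*} [PseudoMetricSpace M] [PseudoMetricSpace X]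
    (f : M → X) (α : ℝ) (b : M) : Prop :=
  Filter.limsup
    (fun r : ℝ => (ENNReal.ofReal r)⁻¹ * ⨆ a ∈ Metric.closedBall b r, edist (f b) (f a))
    (nhdsWithin 0 (Set.Ioi 0)) ≤ ENNReal.ofReal α

/-- Lower hemicontinuity of a correspondence `φ : M ⇉ X`. -/
def LowerHemicontinuousCorr {M X : Type*} [TopologicalSpace M] [TopologicalSpace X]
    (φ : M → Set X) : Prop :=
  ∀ a : M, ∀ U : Set X, IsOpen U → (φ a ∩ U).Nonempty →
    ∃ V : Set M, IsOpen V ∧ a ∈ V ∧ ∀ v ∈ V, (φ v ∩ U).Nonempty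

/-- `φ` is lower pointwise `l`-Lipschitz at `b`. -/
def LowerPtwiseLipschitzAt {M X : Type*} [MetricSpace M] [NormedAddCommGroup X]
    (φ : M → Set X) (l : ℝ) (b : M) : Prop :=
  ∀ y ∈ φ b, ∀ a : M, (φ a ∩ {x : X | ‖x - y‖ ≤ l * dist b a}).Nonempty

/-- `φ` is lower pointwise `l`-Lipschitz. -/
def LowerPtwiseLipschitz {M X : Type*} [MetricSpace M] [NormedAddCommGroup X]
    (φ : M → Set X) (l : ℝ) : Prop :=
  ∀ b : M, LowerPtwiseLipschitzAt φ l b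

section MichaelAux

open scoped Pointwise

variable {M X : Type*} [MetricSpace M] [NormedAddCommGroup X] [NormedSpace ℝ X]

theorem approx_selection (ψ : M → Set X) (hne : ∀ a, (ψ a).Nonempty)
    (hcv : ∀ a, Convex ℝ (ψ a)) (hlh : LowerHemicontinuousCorr ψ)
    {δ : ℝ} (hδ : 0 < δ) :
    ∃ g : M → X, Continuous g ∧ ∀ a, ∃ z ∈ ψ a, ‖g a - z‖ < δ := by
  have hcv' : ∀ a, Convex ℝ (ψ a + Metric.ball (0:X) δ) :=
    fun a => (hcv a).add (convex_ball 0 δ)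
  have H : ∀ a : M, ∃ c : X, ∀ᶠ v in nhds a, c ∈ ψ v + Metric.ball (0:X) δ := by
    intro a
    obtain ⟨c, hc⟩ := hne a
    obtain ⟨V, hVo, haV, hV⟩ := hlh a (Metric.ball c δ) Metric.isOpen_ball
      ⟨c, hc, Metric.mem_ball_self hδ⟩
    refine ⟨c, Filter.eventually_of_mem (hVo.mem_nhds haV) (fun v hv => ?_)⟩
    obtain ⟨z, hz, hzc⟩ := hV v hv
    exact ⟨z, hz, c - z, by
      simpa [Metric.mem_ball, dist_eq_norm, norm_sub_rev] using hzc, by simp⟩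
  obtain ⟨g, hg⟩ := exists_continuous_forall_mem_convex_of_local_const hcv' H
  refine ⟨g, g.continuous, fun a => ?_⟩
  obtain ⟨z, hz, w, hw, hzw⟩ := hg a
  exact ⟨z, hz, by
    have : g a - z = w := by rw [← hzw]; simp
    rw [this]; simpa [Metric.mem_ball, dist_eq_norm] using hw⟩

omit [NormedSpace ℝ X] in
theorem lhc_inter_ball (ψ : M → Set X) (hlh : LowerHemicontinuousCorr ψ)
    {g : M → X} (hg : Continuous g) {δ : ℝ} :
    LowerHemicontinuousCorr (fun a => ψ a ∩ Metric.ball (g a) δ) := by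
  intro a U hU ⟨x, ⟨hxψ, hxb⟩, hxU⟩
  have hs : dist x (g a) < δ := hxb
  set η := (δ - dist x (g a)) / 3 with hη
  have hηpos : 0 < η := by rw [hη]; linarith
  obtain ⟨V₁, hV₁o, haV₁, hV₁⟩ := hlh a (U ∩ Metric.ball x η) (hU.inter Metric.isOpen_ball)
    ⟨x, hxψ, hxU, Metric.mem_ball_self hηpos⟩
  refine ⟨V₁ ∩ g ⁻¹' (Metric.ball (g a) η), hV₁o.inter (Metric.isOpen_ball.preimage hg),
    ⟨haV₁, by simp [Metric.mem_ball_self hηpos]⟩, fun v ⟨hv₁, hv₂⟩ => ?_⟩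
  obtain ⟨z, hzψ, hzU, hzx⟩ := hV₁ v hv₁
  refine ⟨z, ⟨hzψ, ?_⟩, hzU⟩
  have h1 : dist z x < η := hzx
  have h2 : dist (g a) (g v) < η := by
    simpa [dist_comm] using hv₂
  calc dist z (g v) ≤ dist z x + dist x (g a) + dist (g a) (g v) := dist_triangle4 _ _ _ _
    _ < η + dist x (g a) + η := by linarith
    _ ≤ δ := by rw [hη]; linarith

theorem step_selection (ψ : M → Set X) (hcv : ∀ a, Convex ℝ (ψ a))
    (hlh : LowerHemicontinuousCorr ψ) {g : M → X} (hg : Continuous g)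
    {δ δ' : ℝ} (hδ' : 0 < δ') (hgδ : ∀ a, ∃ z ∈ ψ a, ‖g a - z‖ < δ) :
    ∃ g' : M → X, Continuous g' ∧ (∀ a, ∃ z ∈ ψ a, ‖g' a - z‖ < δ') ∧
      ∀ a, ‖g' a - g a‖ < δ + δ' := by
  obtain ⟨g', hg'c, hg'⟩ := approx_selection (fun a => ψ a ∩ Metric.ball (g a) δ)
    (fun a => by
      obtain ⟨z, hz, hz'⟩ := hgδ a
      exact ⟨z, hz, by simpa [Metric.mem_ball, dist_eq_norm, norm_sub_rev] using hz'⟩)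
    (fun a => (hcv a).inter (convex_ball _ _))
    (lhc_inter_ball ψ hlh hg) hδ'
  refine ⟨g', hg'c, fun a => ?_, fun a => ?_⟩
  · obtain ⟨z, ⟨hz, _⟩, hz'⟩ := hg' a
    exact ⟨z, hz, hz'⟩
  · obtain ⟨z, ⟨hz, hzb⟩, hz'⟩ := hg' a
    have h1 : ‖z - g a‖ < δ := by simpa [Metric.mem_ball, dist_eq_norm] using hzb
    have htri := norm_add_le (g' a - z) (z - g a)
    rw [sub_add_sub_cancel] at htri
    linarith

theorem michael_selection [CompleteSpace X] (ψ : M → Set X) (hne : ∀ a, (ψ a).Nonempty)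
    (hcl : ∀ a, IsClosed (ψ a)) (hcv : ∀ a, Convex ℝ (ψ a))
    (hlh : LowerHemicontinuousCorr ψ) :
    ∃ f : M → X, Continuous f ∧ ∀ a, f a ∈ ψ a := by
  set P : ℕ → (M → X) → Prop :=
    fun n f => Continuous f ∧ ∀ a, ∃ z ∈ ψ a, ‖f a - z‖ < (2:ℝ)⁻¹ ^ n with hP
  obtain ⟨f0, hf0c, hf0⟩ := approx_selection ψ hne hcv hlh (δ := 1) one_pos
  have hstep : ∀ (n : ℕ) (f : {f : M → X // P n f}),
      ∃ f' : {f' : M → X // P (n+1) f'},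
        ∀ a, ‖f'.1 a - f.1 a‖ < (2:ℝ)⁻¹ ^ n + (2:ℝ)⁻¹ ^ (n+1) := by
    rintro n ⟨f, hfc, hf⟩
    obtain ⟨f', hf'c, hf'1, hf'2⟩ := step_selection ψ hcv hlh hfc
      (δ' := (2:ℝ)⁻¹ ^ (n+1)) (by positivity) hf
    exact ⟨⟨f', hf'c, hf'1⟩, hf'2⟩
  choose step hstep using hstep
  let F : ∀ n : ℕ, {f : M → X // P n f} :=
    fun n => Nat.rec ⟨f0, hf0c, by simpa using hf0⟩ (fun n fn => step n fn) n
  have hFs : ∀ n, F (n+1) = step n (F n) := fun n => rfl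
  set s : ℕ → M → X := fun n => (F n).1 with hs
  have hdist : ∀ n a, dist (s n a) (s (n+1) a) ≤ 2 * (2:ℝ)⁻¹ ^ n := by
    intro n a
    have key : ‖(F (n+1)).1 a - (F n).1 a‖ < (2:ℝ)⁻¹ ^ n + (2:ℝ)⁻¹ ^ (n+1) := by
      rw [hFs n]; exact hstep n (F n) a
    have h2 : (2:ℝ)⁻¹ ^ (n+1) ≤ (2:ℝ)⁻¹ ^ n := by
      apply pow_le_pow_of_le_one <;> norm_num
    simp only [hs]
    rw [dist_eq_norm, norm_sub_rev]
    linarith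
  have hcauchy : ∀ a, CauchySeq (fun n => s n a) := fun a =>
    cauchySeq_of_le_geometric (2:ℝ)⁻¹ 2 (by norm_num) (fun n => hdist n a)
  have hlim : ∀ a, ∃ L, Tendsto (fun n => s n a) atTop (nhds L) :=
    fun a => cauchySeq_tendsto_of_complete (hcauchy a)
  choose f hf using hlim
  have hunif : ∀ n a, dist (s n a) (f a) ≤ 2 * (2:ℝ)⁻¹ ^ n / (1 - 2⁻¹) :=
    fun n a => dist_le_of_le_geometric_of_tendsto (2:ℝ)⁻¹ 2 (by norm_num)
      (fun m => hdist m a) (hf a) n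
  have hmem : ∀ a, f a ∈ ψ a := by
    intro a
    have hz : ∀ n, ∃ z ∈ ψ a, ‖s n a - z‖ < (2:ℝ)⁻¹ ^ n := fun n => (F n).2.2 a
    choose z hz hz' using hz
    have htz : Tendsto z atTop (nhds (f a)) := by
      rw [tendsto_iff_dist_tendsto_zero]
      refine squeeze_zero (g := fun n => (2:ℝ)⁻¹ ^ n + dist (s n a) (f a))
        (fun n => dist_nonneg) (fun n => ?_) ?_
      · have h1 : dist (z n) (s n a) ≤ (2:ℝ)⁻¹ ^ n := by
          rw [dist_comm, dist_eq_norm]; exact (hz' n).le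
        have := dist_triangle (z n) (s n a) (f a)
        linarith
      · have h1 : Tendsto (fun n : ℕ => (2:ℝ)⁻¹ ^ n) atTop (nhds 0) :=
          tendsto_pow_atTop_nhds_zero_of_lt_one (by norm_num) (by norm_num)
        have h2 : Tendsto (fun n => dist (s n a) (f a)) atTop (nhds 0) :=
          tendsto_iff_dist_tendsto_zero.mp (hf a)
        simpa using h1.add h2
    exact (hcl a).mem_of_tendsto htz (Filter.Eventually.of_forall hz)
  have hcont : Continuous f := by
    have htu : TendstoUniformly s f atTop := by
      rw [Metric.tendstoUniformly_iff]
      intro e he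
      have hb : Tendsto (fun n : ℕ => 2 * (2:ℝ)⁻¹ ^ n / (1 - 2⁻¹)) atTop (nhds 0) := by
        have h1 : Tendsto (fun n : ℕ => (2:ℝ)⁻¹ ^ n) atTop (nhds 0) :=
          tendsto_pow_atTop_nhds_zero_of_lt_one (by norm_num) (by norm_num)
        simpa using (h1.const_mul (2:ℝ)).div_const (1 - 2⁻¹)
      filter_upwards [hb.eventually_lt_const he] with n hn a
      rw [dist_comm]
      exact lt_of_le_of_lt (hunif n a) hn
    exact htu.continuous (Filter.Eventually.of_forall fun n => (F n).2.1).frequently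
  exact ⟨f, hcont, hmem⟩

theorem main13 {M X : Type*} [MetricSpace M] [NormedAddCommGroup X] [NormedSpace ℝ X]
    [CompleteSpace X] (α : ℝ) (hα : 0 ≤ α) (φ : M → Set X)
    (hcl : ∀ a, IsClosed (φ a)) (hcv : ∀ a, Convex ℝ (φ a))
    (hlh : LowerHemicontinuousCorr φ)
    (hlip : ∀ ε : ℝ, 0 < ε → ∀ b : M, ∀ y ∈ φ b, ∀ a : M,
      (φ a ∩ {x : X | ‖x - y‖ ≤ (α + ε) * dist b a}).Nonempty)
    (ε : ℝ) (hε : 0 < ε) (b : M) (y : X) (hy : y ∈ φ b) :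
    ∃ f : M → X, Continuous f ∧ (∀ a, f a ∈ φ a) ∧ f b = y ∧
      ∀ a : M, ‖f b - f a‖ ≤ (α + ε) * dist b a := by
  set ψ : M → Set X := fun a => φ a ∩ {x | ‖x - y‖ ≤ (α + ε/2) * dist b a} with hψdef
  have hψne : ∀ a, (ψ a).Nonempty := fun a => hlip (ε/2) (by linarith) b y hy a
  have hψcl : ∀ a, IsClosed (ψ a) := fun a => (hcl a).inter
    (isClosed_le ((continuous_id.sub continuous_const).norm) continuous_const)
  have hψcv : ∀ a, Convex ℝ (ψ a) := by
    intro a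
    have hset : {x : X | ‖x - y‖ ≤ (α + ε/2) * dist b a}
        = Metric.closedBall y ((α + ε/2) * dist b a) := by
      ext x; simp [Metric.mem_closedBall, dist_eq_norm]
    exact (hcv a).inter (hset ▸ convex_closedBall _ _)
  have hψlh : LowerHemicontinuousCorr ψ := by
    rintro a U hU ⟨x, ⟨hxφ, hxd⟩, hxU⟩
    rcases eq_or_lt_of_le (dist_nonneg : (0:ℝ) ≤ dist b a) with hd | hdpos
    · -- dist b a = 0, so x = y
      have hxy : x = y := by
        have h0 : ‖x - y‖ ≤ 0 := by simpa [← hd] using hxd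
        exact sub_eq_zero.mp (norm_le_zero_iff.mp h0)
      obtain ⟨r, hr, hrU⟩ := Metric.isOpen_iff.mp hU x hxU
      refine ⟨Metric.ball a (r / (α + ε/2 + 1)), Metric.isOpen_ball,
        Metric.mem_ball_self (by positivity), fun v hv => ?_⟩
      obtain ⟨z, hzφ, hzd⟩ := hlip (ε/4) (by linarith) b y hy v
      simp only [Set.mem_setOf_eq] at hzd
      have hdv : dist b v < r / (α + ε/2 + 1) := by
        have h1 := dist_triangle b a v
        have h2 : dist a v < r / (α + ε/2 + 1) := by
          rw [dist_comm]; exact hv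
        linarith
      have hzb : ‖z - y‖ ≤ (α + ε/2) * dist b v := by
        have : (α + ε/4) * dist b v ≤ (α + ε/2) * dist b v := by
          nlinarith [dist_nonneg (x := b) (y := v)]
        linarith
      refine ⟨z, ⟨hzφ, hzb⟩, hrU ?_⟩
      have : ‖z - y‖ < r := by
        have h3 : (α + ε/2) * dist b v < (α + ε/2) * (r / (α + ε/2 + 1)) := by
          apply mul_lt_mul_of_pos_left hdv (by linarith)
        have h4 : (α + ε/2) * (r / (α + ε/2 + 1)) < r := by
          rw [mul_div_assoc']
          rw [div_lt_iff₀ (by linarith)]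
          nlinarith
        linarith
      simpa [Metric.mem_ball, dist_eq_norm, hxy] using this
    · -- dist b a > 0
      obtain ⟨x', hx'φ, hx'd⟩ := hlip (ε/4) (by linarith) b y hy a
      simp only [Set.mem_setOf_eq] at hx'd hxd
      -- pick a point x'' on the segment [x, x'], close to x, inside U
      have hp0 : (fun t : ℝ => x + t • (x' - x)) 0 = x := by simp
      have hcontp : ContinuousAt (fun t : ℝ => x + t • (x' - x)) 0 := by fun_prop
      have hev : ∀ᶠ t : ℝ in nhds 0, x + t • (x' - x) ∈ U := by
        have := hcontp.eventually_mem (hp0 ▸ hU.mem_nhds hxU)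
        simpa using this
      obtain ⟨d0, hd0, hball⟩ := Metric.eventually_nhds_iff.mp hev
      set t : ℝ := min (d0/2) 1 with htdef
      have ht0 : 0 < t := lt_min (by linarith) one_pos
      have ht1 : t ≤ 1 := min_le_right _ _
      set x'' : X := x + t • (x' - x) with hx''def
      have htU : x'' ∈ U := by
        apply hball
        rw [Real.dist_eq, sub_zero, abs_of_pos ht0]
        calc t ≤ d0/2 := min_le_left _ _
          _ < d0 := by linarith
      have hx''φ : x'' ∈ φ a := by
        have hc := hcv a hxφ hx'φ (by linarith : (0:ℝ) ≤ 1 - t) ht0.le (by ring)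
        have : x'' = (1 - t) • x + t • x' := by rw [hx''def]; module
        rw [this]; exact hc
      have hx''d : ‖x'' - y‖ < (α + ε/2) * dist b a := by
        have heq : x'' - y = (1 - t) • (x - y) + t • (x' - y) := by
          rw [hx''def]; module
        have hle : ‖x'' - y‖ ≤ (1 - t) * ‖x - y‖ + t * ‖x' - y‖ := by
          rw [heq]
          refine (norm_add_le _ _).trans (le_of_eq ?_)
          rw [norm_smul, norm_smul, Real.norm_eq_abs, Real.norm_eq_abs,
            abs_of_nonneg (by linarith), abs_of_nonneg ht0.le]
        nlinarith [mul_le_mul_of_nonneg_left hxd (by linarith : (0:ℝ) ≤ 1 - t),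
          mul_le_mul_of_nonneg_left hx'd ht0.le, mul_pos ht0 hdpos]
      set η : ℝ := ((α + ε/2) * dist b a - ‖x'' - y‖) / 2 with hηdef
      have hηpos : 0 < η := by rw [hηdef]; linarith
      obtain ⟨V₁, hV₁o, haV₁, hV₁⟩ := hlh a (U ∩ {w | ‖w - y‖ < ‖x'' - y‖ + η})
        (hU.inter (isOpen_lt ((continuous_id.sub continuous_const).norm) continuous_const))
        ⟨x'', hx''φ, htU, by simp only [Set.mem_setOf_eq]; linarith⟩
      refine ⟨V₁ ∩ {v | ‖x'' - y‖ + η < (α + ε/2) * dist b v},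
        hV₁o.inter (isOpen_lt continuous_const
          (continuous_const.mul (continuous_const.dist continuous_id))),
        ⟨haV₁, by simp only [Set.mem_setOf_eq]; rw [hηdef]; linarith⟩,
        fun v ⟨hv₁, hv₂⟩ => ?_⟩
      obtain ⟨z, hzφ, hzU, hzd⟩ := hV₁ v hv₁
      simp only [Set.mem_setOf_eq] at hzd hv₂
      exact ⟨z, ⟨hzφ, (hzd.trans hv₂).le⟩, hzU⟩
  obtain ⟨f, hfc, hfm⟩ := michael_selection ψ hψne hψcl hψcv hψlh
  have hfb : f b = y := by
    have h1 := (hfm b).2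
    simp only [Set.mem_setOf_eq, dist_self, mul_zero] at h1
    rwa [norm_le_zero_iff, sub_eq_zero] at h1
  refine ⟨f, hfc, fun a => (hfm a).1, hfb, fun a => ?_⟩
  have h1 : ‖f a - y‖ ≤ (α + ε/2) * dist b a := (hfm a).2
  rw [hfb, norm_sub_rev]
  have h2 : (α + ε/2) * dist b a ≤ (α + ε) * dist b a := by
    nlinarith [dist_nonneg (x := b) (y := a)]
  linarith


end MichaelAux

/-- A closed- and convex-valued lower hemicontinuous correspondence that is lower pointwise
`(α+ε)`-Lipschitz for every `ε > 0` admits strongly pointwise `(α+ε)`-Lipschitz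
selections. -/


theorem stmt13 {M X : Type*} [MetricSpace M] [NormedAddCommGroup X] [NormedSpace ℝ X]
    [CompleteSpace X] (α : ℝ) (hα : 0 ≤ α) (φ : M → Set X)
    (hcl : ∀ a, IsClosed (φ a)) (hcv : ∀ a, Convex ℝ (φ a))
    (hlh : LowerHemicontinuousCorr φ)
    (hlip : ∀ ε : ℝ, 0 < ε → LowerPtwiseLipschitz φ (α + ε))
    (ε : ℝ) (hε : 0 < ε) (b : M) (y : X) (hy : y ∈ φ b) :
    ∃ f : M → X, Continuous f ∧ (∀ a, f a ∈ φ a) ∧ f b = y ∧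
      ∀ a : M, ‖f b - f a‖ ≤ (α + ε) * dist b a := by
  exact main13 α hα φ hcl hcv hlh (fun e he b' y' hy' a => hlip e he b' y' hy' a)
    ε hε b y hy
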